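/- Let M = [[0,1],[0,a_2]] ∈ K^{2×2} with a_2 ≠ 0. Then the two matrices A_1 = [[0,0],[1,0]] and A_2 = [[1/a_2, 1],[−1/a_2², −1/a_2]] are linearly independent rank-one matrices trace-orthogonal to both I and M; hence span{I,M}^⊥ (dimension 2) is perfect. -/

import Mathlib

open Matrix

lemma rank_outer_eq_one {K : Type*} [Field K] (u v : Fin 2 → K) (hu : u ≠ 0) (hv : v ≠ 0) :
    (Matrix.of (fun i j => u i * v j)).rank = 1 := by
  have hmv : ∀ x, (Matrix.of (fun i j => u i * v j)).mulVec x = (v ⬝ᵥ x) • u := by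
    intro x
    ext i
    simp [Matrix.mulVec, dotProduct, Fin.sum_univ_two]
    ring
  have hrange : LinearMap.range (Matrix.of (fun i j => u i * v j)).mulVecLin = K ∙ u := by
    apply le_antisymm
    · rintro _ ⟨x, rfl⟩
      rw [Matrix.mulVecLin_apply, hmv]
      exact Submodule.smul_mem _ _ (Submodule.mem_span_singleton_self u)
    · rw [Submodule.span_singleton_le_iff_mem]
      obtain ⟨j, hvj⟩ : ∃ j, v j ≠ 0 := by
        by_contra h
        push_neg at h
        exact hv (funext h)
      refine ⟨(fun k => if k = j then (v j)⁻¹ else 0 : Fin 2 → K), ?_⟩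
      rw [Matrix.mulVecLin_apply, hmv]
      have : v ⬝ᵥ (fun k => if k = j then (v j)⁻¹ else 0 : Fin 2 → K) = 1 := by
        fin_cases j <;> simp_all [dotProduct, Fin.sum_univ_two]
      rw [this, one_smul]
  rw [Matrix.rank, hrange, finrank_span_singleton hu]

lemma ht {K : Type*} [Field K] (a2 : K) :
    (!![0, 1; 0, a2] : Matrix (Fin 2) (Fin 2) K)ᵀ = !![0, 0; 1, a2] := by
  ext i j
  fin_cases i <;> fin_cases j <;> simp

theorem stmt14 {K : Type*} [Field K] (a2 : K) (ha : a2 ≠ 0) :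
    LinearIndependent K
      ![(!![0, 0; 1, 0] : Matrix (Fin 2) (Fin 2) K),
        (!![a2⁻¹, 1; -a2⁻¹ ^ 2, -a2⁻¹] : Matrix (Fin 2) (Fin 2) K)] ∧
    (!![0, 0; 1, 0] : Matrix (Fin 2) (Fin 2) K).rank = 1 ∧
    (!![a2⁻¹, 1; -a2⁻¹ ^ 2, -a2⁻¹] : Matrix (Fin 2) (Fin 2) K).rank = 1 ∧
    Matrix.trace ((!![0, 0; 1, 0] : Matrix (Fin 2) (Fin 2) K) *
      ((1 : Matrix (Fin 2) (Fin 2) K))ᵀ) = 0 ∧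
    Matrix.trace ((!![0, 0; 1, 0] : Matrix (Fin 2) (Fin 2) K) *
      (!![0, 1; 0, a2] : Matrix (Fin 2) (Fin 2) K)ᵀ) = 0 ∧
    Matrix.trace ((!![a2⁻¹, 1; -a2⁻¹ ^ 2, -a2⁻¹] : Matrix (Fin 2) (Fin 2) K) *
      ((1 : Matrix (Fin 2) (Fin 2) K))ᵀ) = 0 ∧
    Matrix.trace ((!![a2⁻¹, 1; -a2⁻¹ ^ 2, -a2⁻¹] : Matrix (Fin 2) (Fin 2) K) *
      (!![0, 1; 0, a2] : Matrix (Fin 2) (Fin 2) K)ᵀ) = 0 ∧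
    ∀ N : Matrix (Fin 2) (Fin 2) K,
      Matrix.trace (N * ((1 : Matrix (Fin 2) (Fin 2) K))ᵀ) = 0 →
      Matrix.trace (N * (!![0, 1; 0, a2] : Matrix (Fin 2) (Fin 2) K)ᵀ) = 0 →
      N ∈ Submodule.span K
        {(!![0, 0; 1, 0] : Matrix (Fin 2) (Fin 2) K),
         (!![a2⁻¹, 1; -a2⁻¹ ^ 2, -a2⁻¹] : Matrix (Fin 2) (Fin 2) K)} := by
  refine ⟨?_, ?_, ?_, ?_, ?_, ?_, ?_, ?_⟩
  · rw [linearIndependent_fin2]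
    constructor
    · intro h
      have := congr_fun (congr_fun h 0) 1
      simp at this
    · intro c h
      have h01 := congr_fun (congr_fun h 0) 1
      have h10 := congr_fun (congr_fun h 1) 0
      simp [Matrix.smul_apply] at h01 h10
      subst h01
      simp at h10
  · have : (!![0, 0; 1, 0] : Matrix (Fin 2) (Fin 2) K)
        = Matrix.of (fun i j => ![0, 1] i * ![1, 0] j) := by
      ext i j
      fin_cases i <;> fin_cases j <;> simp
    rw [this]
    apply rank_outer_eq_one
    · intro h
      have := congr_fun h 1
      simp at this
    · intro h
      have := congr_fun h 0
      simp at this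
  · have : (!![a2⁻¹, 1; -a2⁻¹ ^ 2, -a2⁻¹] : Matrix (Fin 2) (Fin 2) K)
        = Matrix.of (fun i j => ![1, -a2⁻¹] i * ![a2⁻¹, 1] j) := by
      ext i j
      fin_cases i <;> fin_cases j <;> simp <;> ring
    rw [this]
    apply rank_outer_eq_one
    · intro h
      have := congr_fun h 0
      simp at this
    · intro h
      have := congr_fun h 1
      simp at this
  · simp [Matrix.trace, Matrix.mul_apply, Fin.sum_univ_two]
  · rw [ht a2]
    simp [Matrix.trace, Matrix.mul_apply, Fin.sum_univ_two]
  · simp [Matrix.trace, Matrix.mul_apply, Fin.sum_univ_two]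
  · rw [ht a2]
    simp [Matrix.trace, Matrix.mul_apply, Fin.sum_univ_two]
    field_simp
    ring
  · intro N h1 h2
    rw [ht a2] at h2
    simp [Matrix.trace, Matrix.mul_apply, Fin.sum_univ_two] at h1 h2
    rw [Submodule.mem_span_pair]
    refine ⟨N 1 0 + N 0 0 * a2⁻¹, a2 * N 0 0, ?_⟩
    ext i j
    fin_cases i <;> fin_cases j
    · simp [Matrix.smul_apply, Matrix.add_apply]
      field_simp
    · simp [Matrix.smul_apply, Matrix.add_apply]
      linear_combination a2 * h1 - h2
    · simp [Matrix.smul_apply, Matrix.add_apply]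
      field_simp
      ring
    · simp [Matrix.smul_apply, Matrix.add_apply]
      field_simp
      linear_combination -h1
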